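/- For every synchronous relation R ⊆ ℕ × ℕ there exist t ≥ 0 and p > 0 such that: (i) for all a, b ≥ t, (a + p, b + p) ∈ R if and only if (a, b) ∈ R; (ii) for all a, b with b ≥ a + p, (a, b + p) ∈ R if and only if (a, b) ∈ R; (iii) for all a, b with a ≥ b + p, (a + p, b) ∈ R if and only if (a, b) ∈ R. -/

import Mathlib

/-- Encoding of a pair of naturals as a word over the alphabet `Fin 3`,
where letter `0` stands for `B`, `1` for `L`, `2` for `R`. -/
def encPair (k l : ℕ) : List (Fin 3) :=
  (List.range (max k l)).map (fun i => if i < min k l then 0 else if i < k then 1 else 2)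

/-- A binary relation on ℕ is synchronous if the language of encodings of its pairs
is regular. -/
def SyncRel (R : ℕ → ℕ → Prop) : Prop :=
  Language.IsRegular {w : List (Fin 3) | ∃ k l, R k l ∧ encPair k l = w}

/-- The support of a binary relation on ℕ. -/
def supp (R : ℕ → ℕ → Prop) : Set ℕ := {x | ∃ y, R x y ∨ R y x}

/-- A (strict partial) order on ℕ: a transitive relation with no 2-cycle
(in particular irreflexive). -/
def IsOrderRel (R : ℕ → ℕ → Prop) : Prop :=
  (∀ x y z, R x y → R y z → R x z) ∧ ¬∃ x y, R x y ∧ R y x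

/-- The relation is linear if any two distinct elements of the support are comparable. -/
def IsLinearRel (R : ℕ → ℕ → Prop) : Prop :=
  ∀ x ∈ supp R, ∀ y ∈ supp R, x ≠ y → R x y ∨ R y x

/-- The restriction of a relation on ℕ to its support. -/
def restrict (R : ℕ → ℕ → Prop) : supp R → supp R → Prop := fun a b => R a b

lemma encPair_eq (k l : ℕ) :
    encPair k l = List.replicate (min k l) (0 : Fin 3) ++ List.replicate (k - l) 1
      ++ List.replicate (l - k) 2 := by
  apply List.ext_getElem
  · simp [encPair]; omega
  · intro i h1 h2
    simp only [encPair, List.getElem_map, List.getElem_range]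
    simp only [List.getElem_append, List.getElem_replicate, List.length_append,
      List.length_replicate]
    simp only [encPair, List.length_map, List.length_range] at h1
    split_ifs <;> simp_all <;> omega

lemma encPair_inj {k l a b : ℕ} (h : encPair k l = encPair a b) : k = a ∧ l = b := by
  rw [encPair_eq, encPair_eq] at h
  have h0 := congrArg (List.count (0 : Fin 3)) h
  have h1 := congrArg (List.count (1 : Fin 3)) h
  have h2 := congrArg (List.count (2 : Fin 3)) h
  simp [List.count_append, List.count_replicate] at h0 h1 h2
  omega

lemma iter_mul_period {α : Type*} (f : α → α) (x : α) (i c : ℕ)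
    (h : f^[i + c] x = f^[i] x) :
    ∀ q m, i ≤ m → f^[m + q * c] x = f^[m] x := by
  intro q
  induction q with
  | zero => simp
  | succ q ih =>
    intro m hm
    have h1 : m + (q + 1) * c = (m + c) + q * c := by ring
    rw [h1, ih (m + c) (by omega)]
    obtain ⟨d, rfl⟩ := Nat.exists_eq_add_of_le hm
    have h2 : i + d + c = d + (i + c) := by ring
    have h3 : i + d = d + i := by ring
    rw [h2, Function.iterate_add_apply, h, ← Function.iterate_add_apply, h3]

lemma iter_factorial_period {α : Type*} [Fintype α] (f : α → α) (x : α) (m : ℕ)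
    (hm : Fintype.card α ≤ m) :
    f^[m + Nat.factorial (Fintype.card α)] x = f^[m] x := by
  set n := Fintype.card α with hn
  have : ∃ a b : Fin (n + 1), a ≠ b ∧ f^[(a : ℕ)] x = f^[(b : ℕ)] x := by
    obtain ⟨a, b, hab, h⟩ := Fintype.exists_ne_map_eq_of_card_lt
      (fun k : Fin (n + 1) => f^[(k : ℕ)] x) (by simp; omega)
    exact ⟨a, b, hab, h⟩
  obtain ⟨a', b', hab', h'⟩ := this
  have key : ∃ a b : Fin (n + 1), (a : ℕ) < (b : ℕ) ∧ f^[(a : ℕ)] x = f^[(b : ℕ)] x := by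
    rcases Nat.lt_trichotomy (a' : ℕ) (b' : ℕ) with hlt | heq | hlt
    · exact ⟨a', b', hlt, h'⟩
    · exact absurd (Fin.ext heq) hab'
    · exact ⟨b', a', hlt, h'.symm⟩
  obtain ⟨a, b, hlt, h⟩ := key
  set c := (b : ℕ) - (a : ℕ) with hc
  have hcpos : 0 < c := by omega
  have hcle : c ≤ n := by have := b.isLt; omega
  have hdvd : c ∣ Nat.factorial n := Nat.dvd_factorial hcpos hcle
  have hper : f^[(a : ℕ) + c] x = f^[(a : ℕ)] x := by
    have : (a : ℕ) + c = (b : ℕ) := by omega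
    rw [this, h]
  obtain ⟨q, hq⟩ := hdvd
  have := iter_mul_period f x (a : ℕ) c hper q m (by have := a.isLt; omega)
  rwa [Nat.mul_comm, ← hq] at this

lemma evalFrom_replicate {α σ : Type*} (M : DFA α σ) (s : σ) (c : α) (m : ℕ) :
    M.evalFrom s (List.replicate m c) = (fun q => M.step q c)^[m] s := by
  induction m generalizing s with
  | zero => rfl
  | succ m ih =>
    rw [List.replicate_succ]
    show M.evalFrom (M.step s c) (List.replicate m c) = _
    rw [ih, Function.iterate_succ_apply]

theorem sync_periodicity (R : ℕ → ℕ → Prop) (hR : SyncRel R) :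
    ∃ t p : ℕ, 0 < p ∧
      (∀ a b, t ≤ a → t ≤ b → (R (a + p) (b + p) ↔ R a b)) ∧
      (∀ a b, a + p ≤ b → (R a (b + p) ↔ R a b)) ∧
      (∀ a b, b + p ≤ a → (R (a + p) b ↔ R a b)) := by
  obtain ⟨σ, instF, M, hM⟩ := hR
  set n := Fintype.card σ with hn
  have hnp : n ≤ Nat.factorial n := Nat.self_le_factorial n
  have hmem : ∀ a b, R a b ↔ encPair a b ∈ M.accepts := by
    intro a b
    rw [hM]
    constructor
    · exact fun h => ⟨a, b, h, rfl⟩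
    · rintro ⟨k, l, hkl, heq⟩
      obtain ⟨rfl, rfl⟩ := encPair_inj heq
      exact hkl
  have heval : ∀ k l, M.eval (encPair k l) =
      (fun q => M.step q 2)^[l - k] ((fun q => M.step q 1)^[k - l]
        ((fun q => M.step q 0)^[min k l] M.start)) := by
    intro k l
    rw [encPair_eq]
    show M.evalFrom M.start _ = _
    rw [DFA.evalFrom_of_append, DFA.evalFrom_of_append, evalFrom_replicate,
      evalFrom_replicate, evalFrom_replicate]
  refine ⟨n, Nat.factorial n, Nat.factorial_pos n, ?_, ?_, ?_⟩
  · intro a b ha hb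
    rw [hmem, hmem, DFA.mem_accepts, DFA.mem_accepts, heval, heval]
    have h1 : min (a + Nat.factorial n) (b + Nat.factorial n) = min a b + Nat.factorial n := by
      omega
    have h2 : a + Nat.factorial n - (b + Nat.factorial n) = a - b := by omega
    have h3 : b + Nat.factorial n - (a + Nat.factorial n) = b - a := by omega
    rw [h1, h2, h3, iter_factorial_period _ _ _ (by omega)]
  · intro a b hab
    rw [hmem, hmem, DFA.mem_accepts, DFA.mem_accepts, heval, heval]
    have h1 : min a (b + Nat.factorial n) = min a b := by omega
    have h2 : a - (b + Nat.factorial n) = a - b := by omega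
    have h3 : b + Nat.factorial n - a = (b - a) + Nat.factorial n := by omega
    rw [h1, h2, h3, iter_factorial_period _ _ _ (by omega)]
  · intro a b hab
    rw [hmem, hmem, DFA.mem_accepts, DFA.mem_accepts, heval, heval]
    have h1 : min (a + Nat.factorial n) b = min a b := by omega
    have h2 : a + Nat.factorial n - b = (a - b) + Nat.factorial n := by omega
    have h3 : b - (a + Nat.factorial n) = b - a := by omega
    rw [h1, h2, h3, iter_factorial_period _ _ _ (by omega)]
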